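/- Let a and b be positive integers with a <= b, and let S be the set of a-tuples of nonnegative integers consisting of, for each i in [a], the tuple with value b in coordinate i and 0 in all other coordinates, together with the all-ones a-tuple and the elements of Delta^a. Then the down-closure of S has at most 2^a + a*b elements. -/
import Mathlib


namespace TMEnum

/-- `Delta c`: the set of `c`-tuples of naturals with value `2` in exactly one
coordinate and `0` in all others. -/
def Delta (c : ℕ) : Set (Fin c → ℕ) :=
  {δ | ∃ i : Fin c, δ = fun j => if j = i then 2 else 0}

/-- The down-closure of a set `M` of `c`-tuples of naturals: all tuples dominated
coordinatewise by some element of `M`. -/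
def downClosure {c : ℕ} (M : Set (Fin c → ℕ)) : Set (Fin c → ℕ) :=
  {χ | ∃ δ ∈ M, ∀ i, χ i ≤ δ i}

/-- for `0 < a ≤ b`, the down-closure of the set consisting of the tuples
with `b` in one coordinate and `0` elsewhere, the all-ones tuple, and the elements of
`Delta a`, has at most `2^a + a·b` elements. -/
theorem down_closure_complete_bipartite_card (a b : ℕ) (ha : 0 < a) (hab : a ≤ b) :
    (downClosure
      ({t : Fin a → ℕ | ∃ i : Fin a, t = fun j => if j = i then b else 0}
        ∪ {fun _ : Fin a => 1}
        ∪ Delta a)).ncard ≤ 2 ^ a + a * b := by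
  classical
  set m := max b 2 with hm
  set FA : Finset (Fin a → ℕ) := Fintype.piFinset (fun _ => Finset.range 2) with hFA
  set FB : Finset (Fin a → ℕ) :=
    Finset.image (fun p : Fin a × ℕ => fun j => if j = p.1 then p.2 else 0)
      (Finset.univ ×ˢ Finset.Icc 2 m) with hFB
  have hb1 : 1 ≤ b := le_trans ha hab
  have hsub : (downClosure
      ({t : Fin a → ℕ | ∃ i : Fin a, t = fun j => if j = i then b else 0}
        ∪ {fun _ : Fin a => 1}
        ∪ Delta a)) ⊆ ((FA ∪ FB : Finset (Fin a → ℕ)) : Set (Fin a → ℕ)) := by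
    rintro χ ⟨δ, hδ, hle⟩
    simp only [Finset.coe_union, Set.mem_union, Finset.mem_coe]
    have memA : (∀ i, χ i ≤ 1) → χ ∈ FA := by
      intro h
      simp only [hFA, Fintype.mem_piFinset, Finset.mem_range]
      intro i; exact Nat.lt_of_le_of_lt (h i) (by norm_num)
    have memB : ∀ i : Fin a, (∀ j, j ≠ i → χ j = 0) → 2 ≤ χ i → χ i ≤ m → χ ∈ FB := by
      intro i hz h2 hM
      simp only [hFB, Finset.mem_image, Finset.mem_product, Finset.mem_univ,
        Finset.mem_Icc]
      refine ⟨⟨i, χ i⟩, ⟨⟨trivial, h2, hM⟩, ?_⟩⟩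
      funext j
      by_cases hj : j = i
      · simp [hj]
      · simp [hj, hz j hj]
    rcases hδ with (hδ | hδ) | hδ
    · obtain ⟨i, rfl⟩ := hδ
      have hz : ∀ j, j ≠ i → χ j = 0 := by
        intro j hj; have := hle j; simpa [hj] using this
      by_cases h1 : χ i ≤ 1
      · left; apply memA; intro j
        by_cases hj : j = i
        · rw [hj]; exact h1
        · rw [hz j hj]; exact Nat.zero_le 1
      · right; apply memB i hz (by omega)
        have := hle i; simp at this; exact le_trans this (le_max_left _ _)
    · rw [Set.mem_singleton_iff] at hδ; subst hδ
      left; apply memA; intro i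
      exact hle i
    · obtain ⟨i, rfl⟩ := hδ
      have hz : ∀ j, j ≠ i → χ j = 0 := by
        intro j hj; have := hle j; simpa [hj] using this
      by_cases h1 : χ i ≤ 1
      · left; apply memA; intro j
        by_cases hj : j = i
        · rw [hj]; exact h1
        · rw [hz j hj]; exact Nat.zero_le 1
      · right; apply memB i hz (by omega)
        have := hle i; simp at this; exact le_trans this (le_max_right _ _)
  calc (downClosure _).ncard ≤ (FA ∪ FB).card := by
        rw [← Set.ncard_coe_finset (FA ∪ FB)]
        exact Set.ncard_le_ncard hsub (Finset.finite_toSet _)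
    _ ≤ FA.card + FB.card := Finset.card_union_le _ _
    _ ≤ 2 ^ a + a * b := by
        have hA : FA.card = 2 ^ a := by
          simp [hFA, Fintype.card_piFinset]
        have hB : FB.card ≤ a * b := by
          calc FB.card ≤ (Finset.univ ×ˢ Finset.Icc 2 m).card :=
                Finset.card_image_le
            _ = a * (Finset.Icc 2 m).card := by simp [Finset.card_product]
            _ ≤ a * b := Nat.mul_le_mul_left a (by rw [Nat.card_Icc]; omega)
        omega
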